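/- Under the EM setup, if y_{n+1} maximizes Q(· | y_n) (in particular Q(y_{n+1} | y_n) ≥ Q(y_n | y_n)), then ML(y_{n+1}) ≥ ML(y_n). -/
import Mathlib

lemma gibbs_ineq {K : Type*} (s : Finset K) (a b : K → ℝ)
    (ha : ∀ k ∈ s, 0 < a k) (hb : ∀ k ∈ s, 0 < b k)
    (hsa : ∑ k ∈ s, a k = 1) (hsb : ∑ k ∈ s, b k = 1) :
    ∑ k ∈ s, a k * Real.log (b k) ≤ ∑ k ∈ s, a k * Real.log (a k) := by
  have h : ∑ k ∈ s, (a k * Real.log (b k) - a k * Real.log (a k)) ≤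
      ∑ k ∈ s, (b k - a k) := by
    apply Finset.sum_le_sum
    intro k hk
    have hak := ha k hk
    have hbk := hb k hk
    have hlog := Real.log_le_sub_one_of_pos (div_pos hbk hak)
    rw [Real.log_div (ne_of_gt hbk) (ne_of_gt hak)] at hlog
    have h2 : a k * (Real.log (b k) - Real.log (a k)) ≤ a k * (b k / a k - 1) :=
      mul_le_mul_of_nonneg_left hlog (le_of_lt hak)
    have h3 : a k * (b k / a k - 1) = b k - a k := by
      field_simp
    nlinarith
  rw [Finset.sum_sub_distrib, Finset.sum_sub_distrib, hsa, hsb] at h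
  linarith

theorem em_step_increases_likelihood {J K Y : Type*} [Fintype J]
    (N : J → Finset K) (hN : ∀ j, (N j).Nonempty)
    (π : J → K → ℝ) (hπ : ∀ j, ∀ k ∈ N j, 0 < π j k)
    (p : J → K → Y → ℝ) (hp : ∀ j, ∀ k ∈ N j, ∀ y, 0 < p j k y)
    (ML : Y → ℝ) (hML : ∀ y, ML y = ∑ j, Real.log (∑ k ∈ N j, π j k * p j k y))
    (Ahat : Y → J → K → ℝ)
    (hA : ∀ y' j, ∀ k ∈ N j,
      Ahat y' j k = π j k * p j k y' / ∑ k' ∈ N j, π j k' * p j k' y')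
    (Q : Y → Y → ℝ)
    (hQ : ∀ y y', Q y y' =
      ∑ j, ∑ k ∈ N j, Ahat y' j k * Real.log (π j k * p j k y))
    (yn ynext : Y) (hmax : Q ynext yn ≥ Q yn yn) :
    ML ynext ≥ ML yn := by
  set S : Y → J → ℝ := fun y j => ∑ k ∈ N j, π j k * p j k y with hS
  have hSpos : ∀ y j, 0 < S y j := fun y j =>
    Finset.sum_pos (fun k hk => mul_pos (hπ j k hk) (hp j k hk y)) (hN j)
  have hApos : ∀ y j, ∀ k ∈ N j, 0 < Ahat y j k := by
    intro y j k hk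
    rw [hA y j k hk]
    exact div_pos (mul_pos (hπ j k hk) (hp j k hk y)) (hSpos y j)
  have hAsum : ∀ y j, ∑ k ∈ N j, Ahat y j k = 1 := by
    intro y j
    rw [Finset.sum_congr rfl (fun k hk => hA y j k hk), ← Finset.sum_div]
    exact div_self (ne_of_gt (hSpos y j))
  -- Q y y' = ML y + H y y'
  have key : ∀ y y', Q y y' = ML y + ∑ j, ∑ k ∈ N j, Ahat y' j k * Real.log (Ahat y j k) := by
    intro y y'
    rw [hQ, hML, ← Finset.sum_add_distrib]
    apply Finset.sum_congr rfl
    intro j _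
    have : ∀ k ∈ N j, Ahat y' j k * Real.log (π j k * p j k y) =
        Ahat y' j k * Real.log (S y j) + Ahat y' j k * Real.log (Ahat y j k) := by
      intro k hk
      have hπp : 0 < π j k * p j k y := mul_pos (hπ j k hk) (hp j k hk y)
      have : Real.log (π j k * p j k y) = Real.log (S y j) + Real.log (Ahat y j k) := by
        rw [hA y j k hk, Real.log_div (ne_of_gt hπp) (ne_of_gt (hSpos y j))]
        ring
      rw [this]; ring
    rw [Finset.sum_congr rfl this, Finset.sum_add_distrib, ← Finset.sum_mul, hAsum]
    ring
  have hgibbs : ∑ j, ∑ k ∈ N j, Ahat yn j k * Real.log (Ahat ynext j k) ≤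
      ∑ j, ∑ k ∈ N j, Ahat yn j k * Real.log (Ahat yn j k) := by
    apply Finset.sum_le_sum
    intro j _
    exact gibbs_ineq (N j) (Ahat yn j) (Ahat ynext j)
      (hApos yn j) (hApos ynext j) (hAsum yn j) (hAsum ynext j)
  have h1 := key ynext yn
  have h2 := key yn yn
  linarith
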